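/- For every natural number n ≥ 1, the number of pairs (x,y) of integers with x² + y² = n equals 4(d₁,₄(n) − d₃,₄(n)), where d_{j,4}(n) denotes the number of positive divisors d of n with d ≡ j (mod 4). -/

import Mathlib

open Zsqrtd

set_option maxHeartbeats 1000000 in
set_option synthInstance.maxHeartbeats 400000 in
lemma GI.decompositionMonoid : DecompositionMonoid GaussianInt := inferInstance

attribute [local instance] GI.decompositionMonoid

namespace Jac

lemma star_dvd {π z : GaussianInt} (h : π ∣ star z) : star π ∣ z := by
  have := map_dvd (starRingEnd GaussianInt) h
  simpa [← starRingEnd_apply] using this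

lemma prime_of_norm_prime {z : GaussianInt} {p : ℕ} (hp : p.Prime) (h : z.norm = (p : ℤ)) :
    Prime z := by
  rw [← irreducible_iff_prime]
  constructor
  · intro hu
    rw [← Zsqrtd.norm_eq_one_iff] at hu
    rw [h] at hu
    simp at hu
    exact hp.one_lt.ne' hu
  · intro a b hab
    have key : a.norm.natAbs * b.norm.natAbs = p := by
      have := congrArg (fun w => (Zsqrtd.norm w).natAbs) hab
      simpa [Zsqrtd.norm_mul, Int.natAbs_mul, h] using this.symm
    rcases hp.eq_one_or_self_of_dvd a.norm.natAbs ⟨_, key.symm⟩ with h1 | h1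
    · left; exact Zsqrtd.norm_eq_one_iff.mp h1
    · right
      apply Zsqrtd.norm_eq_one_iff.mp
      rw [h1] at key
      nlinarith [hp.one_lt]

lemma dvd_or_star_dvd {π z : GaussianInt} (hπ : Prime π)
    (hdvd : π ∣ ((z.norm : ℤ) : GaussianInt)) : π ∣ z ∨ star π ∣ z := by
  have h2 : π ∣ z * star z := by rw [← Zsqrtd.norm_eq_mul_conj]; exact hdvd
  rcases hπ.2.2 _ _ h2 with h | h
  · exact Or.inl h
  · exact Or.inr (star_dvd h)

lemma norm_quot {z w π : GaussianInt} {c q : ℕ} (hz : z.norm = ((q * c : ℕ) : ℤ))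
    (hw : z = π * w) (hπ : π.norm = (q : ℤ)) (hq : q ≠ 0) : w.norm = (c : ℤ) := by
  have h := congrArg Zsqrtd.norm hw
  rw [hz, Zsqrtd.norm_mul, hπ] at h
  have hq0 : ((q : ℤ)) ≠ 0 := by exact_mod_cast hq
  apply mul_left_cancel₀ hq0
  rw [← h]; push_cast; ring

lemma split : ∀ m : ℕ, ∀ n : ℕ, Nat.Coprime m n → ∀ z : GaussianInt,
    z.norm = ((m * n : ℕ) : ℤ) →
    ∃ a b : GaussianInt, z = a * b ∧ a.norm = (m : ℤ) ∧ b.norm = (n : ℤ) := by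
  intro m
  induction m using Nat.strong_induction_on with
  | _ m IH =>
    intro n hco z hz
    rcases Nat.eq_zero_or_pos m with h0 | h0
    · -- m = 0 : then n = 1, z = 0
      have hn1 : n = 1 := by simpa [h0] using hco
      subst h0; subst hn1
      refine ⟨0, 1, ?_, by simp, by simp⟩
      simp only [Nat.zero_mul, Nat.cast_zero] at hz
      have := Zsqrtd.norm_eq_zero_iff (by norm_num : (-1:ℤ) < 0) z
      simp [zero_mul, this.mp hz]
    rcases eq_or_lt_of_le (show 1 ≤ m by omega) with h1 | h1
    · refine ⟨1, z, by simp, by simp [← h1], by simpa [← h1] using hz⟩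
    have hm2 : 2 ≤ m := h1
    set p := m.minFac with hpdef
    have hp : p.Prime := Nat.minFac_prime (by omega)
    have hpm : p ∣ m := Nat.minFac_dvd m
    have hpn : ¬ p ∣ n := fun hd =>
      hp.one_lt.ne' (Nat.eq_one_of_dvd_one (hco ▸ Nat.dvd_gcd hpm hd))
    have hp2' : 2 ≤ p := hp.two_le
    by_cases h3 : p % 4 = 3
    · -- p inert
      haveI : Fact p.Prime := ⟨hp⟩
      have hprime : Prime (p : GaussianInt) :=
        (GaussianInt.prime_iff_mod_four_eq_three_of_nat_prime p).mpr h3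
      have hnormp : (p : GaussianInt).norm = ((p * p : ℕ) : ℤ) := by
        push_cast; rw [Zsqrtd.norm_natCast]
      have hnd : (p : GaussianInt) ∣ ((z.norm : ℤ) : GaussianInt) := by
        rw [hz]
        have h4 : (p : ℕ) ∣ m * n := hpm.mul_right n
        have : ((p:ℕ) : GaussianInt) ∣ ((m * n : ℕ) : GaussianInt) := Nat.cast_dvd_cast h4
        simpa using this
      have hdvd : (p : GaussianInt) ∣ z := by
        rcases dvd_or_star_dvd hprime hnd with h | h
        · exact h
        · simpa using h
      obtain ⟨w, hw⟩ := hdvd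
      have hp2 : p * p ∣ m := by
        have h1 : p * p ∣ m * n := by
          have h := congrArg Zsqrtd.norm hw
          rw [hz, Zsqrtd.norm_mul, Zsqrtd.norm_natCast] at h
          have h2 : ((p*p : ℕ) : ℤ) ∣ ((m*n : ℕ) : ℤ) := ⟨w.norm, by push_cast at h ⊢; linarith⟩
          exact_mod_cast h2
        exact Nat.Coprime.dvd_of_dvd_mul_right
          (Nat.Coprime.mul (hp.coprime_iff_not_dvd.mpr hpn) (hp.coprime_iff_not_dvd.mpr hpn)) h1
      obtain ⟨m₁, hm₁⟩ := hp2
      have hwnorm : w.norm = ((m₁ * n : ℕ) : ℤ) := by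
        refine norm_quot (c := m₁ * n) (q := p * p) ?_ hw ?_ (by positivity)
        · rw [hz, hm₁]; push_cast; ring_nf
        · rw [Zsqrtd.norm_natCast]; push_cast; ring_nf
      have hm₁lt : m₁ < m := by
        have h4 : 4 ≤ p * p := by nlinarith
        rcases Nat.eq_zero_or_pos m₁ with h5 | h5
        · subst h5; simp at hm₁; omega
        · calc m₁ < 4 * m₁ := by omega
            _ ≤ p * p * m₁ := Nat.mul_le_mul_right _ h4
            _ = m := hm₁.symm
      have hco₁ : Nat.Coprime m₁ n := Nat.Coprime.coprime_dvd_left ⟨p*p, by rw [hm₁]; ring⟩ hco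
      obtain ⟨a', b', hab, ha, hb⟩ := IH m₁ hm₁lt n hco₁ w hwnorm
      refine ⟨p * a', b', by rw [hw, hab]; ring, ?_, hb⟩
      rw [Zsqrtd.norm_mul, Zsqrtd.norm_natCast, ha, hm₁]; push_cast; ring
    · -- p ≡ 1 mod 4 or p = 2 : p is a norm
      haveI : Fact p.Prime := ⟨hp⟩
      obtain ⟨x, y, hxy⟩ := Nat.Prime.sq_add_sq (p := p) h3
      set π : GaussianInt := ⟨(x:ℤ), (y:ℤ)⟩ with hπdef
      have hπnorm : π.norm = (p : ℤ) := by
        rw [Zsqrtd.norm_def, ← hxy]; push_cast; ring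
      have hπprime : Prime π := prime_of_norm_prime hp hπnorm
      have hσprime : Prime (star π) := prime_of_norm_prime hp (by rw [Zsqrtd.norm_conj, hπnorm])
      have hpmn : ((p:ℕ) : GaussianInt) ∣ ((z.norm : ℤ) : GaussianInt) := by
        rw [hz]
        have h4 : (p : ℕ) ∣ m * n := hpm.mul_right n
        have : ((p:ℕ) : GaussianInt) ∣ ((m * n : ℕ) : GaussianInt) := Nat.cast_dvd_cast h4
        simpa using this
      have hππ : π * star π = ((p:ℕ) : GaussianInt) := by
        have := Zsqrtd.norm_eq_mul_conj π
        rw [hπnorm] at this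
        exact_mod_cast this.symm
      have hρ : ∃ ρ : GaussianInt, ρ.norm = (p:ℤ) ∧ ρ ∣ z := by
        rcases dvd_or_star_dvd hπprime (dvd_trans ⟨star π, hππ.symm⟩ hpmn) with h | h
        · exact ⟨π, hπnorm, h⟩
        · exact ⟨star π, by rw [Zsqrtd.norm_conj, hπnorm], h⟩
      obtain ⟨ρ, hρnorm, w, hw⟩ := hρ
      obtain ⟨m₁, hm₁⟩ := hpm
      have hwnorm : w.norm = ((m₁ * n : ℕ) : ℤ) := by
        refine norm_quot (c := m₁ * n) (q := p) ?_ hw hρnorm (by positivity)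
        rw [hz, hm₁]; push_cast; ring_nf
      have hm₁lt : m₁ < m := by
        rcases Nat.eq_zero_or_pos m₁ with h5 | h5
        · subst h5; simp at hm₁; omega
        · calc m₁ < 2 * m₁ := by omega
            _ ≤ p * m₁ := Nat.mul_le_mul_right _ hp2'
            _ = m := hm₁.symm
      have hco₁ : Nat.Coprime m₁ n := Nat.Coprime.coprime_dvd_left ⟨p, by rw [hm₁]; ring⟩ hco
      obtain ⟨a', b', hab, ha, hb⟩ := IH m₁ hm₁lt n hco₁ w hwnorm
      refine ⟨ρ * a', b', by rw [hw, hab]; ring, ?_, hb⟩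
      rw [Zsqrtd.norm_mul, hρnorm, ha, hm₁]; push_cast; ring

end Jac

namespace Jac

noncomputable def Zc (n : ℕ) : ℕ := Nat.card {z : GaussianInt // z.norm = (n : ℤ)}

lemma norm_one_elim {z : GaussianInt} (h : z.norm = 1) :
    z = ⟨1,0⟩ ∨ z = ⟨-1,0⟩ ∨ z = ⟨0,1⟩ ∨ z = ⟨0,-1⟩ := by
  have h1 : z.re * z.re + z.im * z.im = 1 := by
    rw [Zsqrtd.norm_def] at h; linarith
  have hre1 : z.re ≤ 1 := by nlinarith [mul_self_nonneg z.im, mul_self_nonneg z.re]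
  have hre2 : -1 ≤ z.re := by nlinarith [mul_self_nonneg z.im, mul_self_nonneg z.re]
  obtain ⟨a, b⟩ := z
  simp only [Zsqrtd.mk.injEq] at *
  interval_cases a
  · have : b = 0 := by nlinarith
    right; left; exact ⟨rfl, this⟩
  · have : b * b = 1 := by linarith
    rcases mul_self_eq_one_iff.mp this with hb | hb
    · right; right; left; exact ⟨rfl, hb⟩
    · right; right; right; exact ⟨rfl, hb⟩
  · have : b = 0 := by nlinarith
    left; exact ⟨rfl, this⟩

lemma Zc_one : Zc 1 = 4 := by
  have hset : {z : GaussianInt | z.norm = ((1:ℕ) : ℤ)} =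
      ((({⟨1,0⟩, ⟨-1,0⟩, ⟨0,1⟩, ⟨0,-1⟩} : Finset GaussianInt) : Set GaussianInt)) := by
    ext z
    simp only [Set.mem_setOf_eq, Finset.coe_insert, Set.mem_insert_iff, Finset.coe_singleton,
      Set.mem_singleton_iff, Nat.cast_one]
    constructor
    · intro h
      rcases norm_one_elim h with h | h | h | h <;> tauto
    · rintro (rfl | rfl | rfl | rfl) <;> simp [Zsqrtd.norm_def]
  have : Zc 1 = Set.ncard {z : GaussianInt | z.norm = ((1:ℕ) : ℤ)} := by
    rw [Zc, ← Nat.card_coe_set_eq]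
    rfl
  rw [this, hset, Set.ncard_coe_finset]
  decide

end Jac

namespace Jac

lemma norm_dvd_of_dvd {a b : GaussianInt} (h : a ∣ b) : a.norm ∣ b.norm := by
  obtain ⟨c, rfl⟩ := h; rw [Zsqrtd.norm_mul]; exact dvd_mul_right _ _

lemma ne_zero_of_norm {z : GaussianInt} {k : ℕ} (hk : k ≠ 0) (h : z.norm = (k:ℤ)) : z ≠ 0 := by
  intro h0; subst h0
  simp [Zsqrtd.norm] at h
  exact hk (by exact_mod_cast h.symm)

lemma coprime_of_norm_coprime {a b : GaussianInt} {m n : ℕ} (ha : a.norm = (m:ℤ))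
    (hb : b.norm = (n:ℤ)) (h : Nat.Coprime m n) : IsCoprime a b := by
  classical
  rw [← EuclideanDomain.gcd_isUnit_iff]
  set g := EuclideanDomain.gcd a b with hg
  have h1 : g.norm ∣ (m:ℤ) := ha ▸ norm_dvd_of_dvd (EuclideanDomain.gcd_dvd_left a b)
  have h2 : g.norm ∣ (n:ℤ) := hb ▸ norm_dvd_of_dvd (EuclideanDomain.gcd_dvd_right a b)
  have h3 : g.norm.natAbs ∣ Nat.gcd m n := Nat.dvd_gcd
    (by simpa using Int.natAbs_dvd_natAbs.mpr h1) (by simpa using Int.natAbs_dvd_natAbs.mpr h2)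
  rw [h] at h3
  exact Zsqrtd.norm_eq_one_iff.mp (Nat.eq_one_of_dvd_one h3)

lemma mul_star_self {u : GaussianInt} (h : u.norm = 1) : u * star u = 1 := by
  have := Zsqrtd.norm_eq_mul_conj u
  rw [h] at this
  exact_mod_cast this.symm

lemma star_mul_self {u : GaussianInt} (h : u.norm = 1) : star u * u = 1 := by
  rw [mul_comm]; exact mul_star_self h

lemma Zc_mul {m n : ℕ} (hm : 1 ≤ m) (hn : 1 ≤ n) (hco : Nat.Coprime m n) :
    Zc 1 * Zc (m * n) = Zc m * Zc n := by
  classical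
  have hm0 : ((m:ℤ)) ≠ 0 := by positivity
  have hsp : ∀ z : {z : GaussianInt // z.norm = ((m*n : ℕ) : ℤ)},
      ∃ ab : GaussianInt × GaussianInt,
        z.1 = ab.1 * ab.2 ∧ ab.1.norm = (m:ℤ) ∧ ab.2.norm = (n:ℤ) := by
    intro z
    obtain ⟨a, b, h1, h2, h3⟩ := split m n hco z.1 z.2
    exact ⟨(a,b), h1, h2, h3⟩
  choose AB hzz hA hB using hsp
  have hAne : ∀ z, (AB z).1 ≠ 0 := fun z => ne_zero_of_norm (by omega) (hA z)
  let f : {u : GaussianInt // u.norm = ((1:ℕ) : ℤ)} × {z : GaussianInt // z.norm = ((m*n : ℕ):ℤ)} →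
      {a : GaussianInt // a.norm = ((m : ℕ) : ℤ)} × {b : GaussianInt // b.norm = ((n:ℕ):ℤ)} := fun x =>
    (⟨x.1.1 * (AB x.2).1, by rw [Zsqrtd.norm_mul, x.1.2, hA]; simp⟩,
     ⟨star x.1.1 * (AB x.2).2, by rw [Zsqrtd.norm_mul, Zsqrtd.norm_conj, x.1.2, hB]; simp⟩)
  have hbij : Function.Bijective f := by
    constructor
    · rintro ⟨u, z⟩ ⟨v, z'⟩ h
      have hu1 : u.1.norm = 1 := by simpa using u.2
      have hv1 : v.1.norm = 1 := by simpa using v.2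
      have h1 : u.1 * (AB z).1 = v.1 * (AB z').1 := congrArg (fun t => (t.1.1 : GaussianInt)) h
      have h2 : star u.1 * (AB z).2 = star v.1 * (AB z').2 :=
        congrArg (fun t => (t.2.1 : GaussianInt)) h
      have hzeq : z.1 = z'.1 := by
        have := congrArg₂ (· * ·) h1 h2
        calc z.1 = (u.1 * star u.1) * ((AB z).1 * (AB z).2) := by
              rw [mul_star_self hu1, one_mul, ← hzz z]
          _ = (u.1 * (AB z).1) * (star u.1 * (AB z).2) := by ring
          _ = (v.1 * (AB z').1) * (star v.1 * (AB z').2) := this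
          _ = (v.1 * star v.1) * ((AB z').1 * (AB z').2) := by ring
          _ = z'.1 := by rw [mul_star_self hv1, one_mul, ← hzz z']
      have hz2 : z = z' := Subtype.ext hzeq
      subst hz2
      have : u.1 = v.1 := mul_right_cancel₀ (hAne z) h1
      exact Prod.ext (Subtype.ext this) rfl
    · rintro ⟨a, b⟩
      set z : {z : GaussianInt // z.norm = ((m*n : ℕ):ℤ)} :=
        ⟨a.1 * b.1, by rw [Zsqrtd.norm_mul, a.2, b.2]; push_cast; ring⟩ with hzdef
      have hab : z.1 = a.1 * b.1 := rfl
      have hco1 : IsCoprime a.1 (AB z).2 := coprime_of_norm_coprime a.2 (hB z) hco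
      have hd1 : a.1 ∣ (AB z).1 := hco1.dvd_of_dvd_mul_right (by rw [← hzz z, hab]; exact ⟨b.1, rfl⟩)
      have hco2 : IsCoprime (AB z).1 b.1 := coprime_of_norm_coprime (hA z) b.2 hco
      have hd2 : (AB z).1 ∣ a.1 := hco2.dvd_of_dvd_mul_right (by rw [← hab, hzz z]; exact ⟨(AB z).2, rfl⟩)
      obtain ⟨u, hu⟩ := associated_of_dvd_dvd hd2 hd1
      have hunorm : (u : GaussianInt).norm = 1 := by
        have h5 := congrArg Zsqrtd.norm hu
        rw [Zsqrtd.norm_mul, hA, a.2] at h5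
        have : (m:ℤ) * (u : GaussianInt).norm = (m:ℤ) * 1 := by rw [mul_one]; exact h5
        exact mul_left_cancel₀ hm0 this
      refine ⟨(⟨u, by rw [hunorm]; simp⟩, z), ?_⟩
      have hB' : (u : GaussianInt) * b.1 = (AB z).2 := by
        apply mul_left_cancel₀ (hAne z)
        calc (AB z).1 * ((u : GaussianInt) * b.1) = ((AB z).1 * u) * b.1 := by ring
          _ = a.1 * b.1 := by rw [hu]
          _ = z.1 := rfl
          _ = (AB z).1 * (AB z).2 := hzz z
      refine Prod.ext (Subtype.ext ?_) (Subtype.ext ?_)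
      · show (u : GaussianInt) * (AB z).1 = a.1
        rw [mul_comm]; exact hu
      · show star (u : GaussianInt) * (AB z).2 = b.1
        rw [← hB', ← mul_assoc, star_mul_self hunorm, one_mul]
  have hcard := Nat.card_eq_of_bijective f hbij
  rw [Nat.card_prod, Nat.card_prod] at hcard
  exact hcard

end Jac

namespace Jac

lemma norm_pow (z : GaussianInt) (j : ℕ) : (z^j).norm = z.norm ^ j := by
  induction j with
  | zero => simp
  | succ j ih => rw [pow_succ, Zsqrtd.norm_mul, ih, pow_succ]

lemma q_ne_zero {π : GaussianInt} {q : ℕ} (hπ : Prime π) (hq : π.norm = (q:ℤ)) : q ≠ 0 := by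
  intro h0; subst h0
  simp only [Nat.cast_zero] at hq
  exact hπ.ne_zero ((Zsqrtd.norm_eq_zero_iff (by norm_num : (-1:ℤ) < 0) π).mp hq)

/-- Stepping lemma: if `π` has norm `q`, is prime, and divides its own conjugate,
then `Zc (q * c) = Zc c`. -/
lemma Zc_step {π : GaussianInt} {q : ℕ} (hπ : Prime π) (hq : π.norm = (q:ℤ))
    (hstar : π ∣ star π) (c : ℕ) : Zc (q * c) = Zc c := by
  have hq0 : q ≠ 0 := q_ne_zero hπ hq
  have hππ : π * star π = ((q:ℕ) : GaussianInt) := by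
    have := Zsqrtd.norm_eq_mul_conj π
    rw [hq] at this
    exact_mod_cast this.symm
  let f : {w : GaussianInt // w.norm = ((c:ℕ) : ℤ)} →
      {z : GaussianInt // z.norm = ((q * c : ℕ) : ℤ)} := fun w =>
    ⟨π * w.1, by rw [Zsqrtd.norm_mul, hq, w.2]; push_cast; ring⟩
  have hbij : Function.Bijective f := by
    constructor
    · rintro w w' h
      have h1 : π * w.1 = π * w'.1 := congrArg Subtype.val h
      exact Subtype.ext (mul_left_cancel₀ hπ.ne_zero h1)
    · rintro ⟨z, hz⟩
      have hdvd : π ∣ z := by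
        have h1 : π ∣ ((z.norm : ℤ) : GaussianInt) := by
          rw [hz]
          have h2 : ((q:ℕ) : GaussianInt) ∣ ((q * c : ℕ) : GaussianInt) :=
            Nat.cast_dvd_cast (Dvd.intro c rfl)
          exact dvd_trans ⟨star π, hππ.symm⟩ (by simpa using h2)
        rcases dvd_or_star_dvd hπ h1 with h | h
        · exact h
        · exact dvd_trans hstar h
      obtain ⟨w, hw⟩ := hdvd
      exact ⟨⟨w, norm_quot hz hw hq hq0⟩, Subtype.ext hw.symm⟩
  exact (Nat.card_eq_of_bijective f hbij).symm

end Jac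

namespace Jac

lemma Zc_two_pow (k : ℕ) : Zc (2^k) = Zc 1 := by
  induction k with
  | zero => rfl
  | succ k ih =>
    have hn2 : (⟨1,1⟩ : GaussianInt).norm = ((2:ℕ) : ℤ) := by
      norm_num [Zsqrtd.norm_def]
    have hπ : Prime (⟨1,1⟩ : GaussianInt) := prime_of_norm_prime Nat.prime_two hn2
    have hstar : (⟨1,1⟩ : GaussianInt) ∣ star (⟨1,1⟩ : GaussianInt) :=
      ⟨⟨0,-1⟩, by decide⟩
    have := Zc_step (q := 2) hπ hn2 hstar (2^k)
    rw [← pow_succ'] at this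
    rw [this, ih]

section Inert

variable {p : ℕ} (hp : p.Prime) (h3 : p % 4 = 3)
include hp h3

lemma inert_prime : Prime ((p : ℕ) : GaussianInt) := by
  haveI : Fact p.Prime := ⟨hp⟩
  exact (GaussianInt.prime_iff_mod_four_eq_three_of_nat_prime p).mpr h3

lemma Zc_inert_even (k : ℕ) : Zc (p^(2*k)) = Zc 1 := by
  induction k with
  | zero => rfl
  | succ k ih =>
    have hprime := inert_prime hp h3
    have hnorm : ((p:ℕ) : GaussianInt).norm = ((p*p : ℕ) : ℤ) := by
      push_cast; rw [Zsqrtd.norm_natCast]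
    have := Zc_step hprime hnorm (by simp) (p^(2*k))
    have heq : p * p * p ^ (2 * k) = p ^ (2 * (k+1)) := by ring
    rw [heq] at this
    rw [this, ih]

lemma Zc_inert_odd (k : ℕ) : Zc (p^(2*k+1)) = 0 := by
  have hprime := inert_prime hp h3
  have hempty : ∀ k, ∀ z : GaussianInt, z.norm ≠ ((p^(2*k+1) : ℕ) : ℤ) := by
    intro k
    induction k with
    | zero =>
      intro z hz
      have hzz : z * star z = ((p:ℕ) : GaussianInt) := by
        have := Zsqrtd.norm_eq_mul_conj z
        rw [hz] at this
        simpa using this.symm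
      rcases hprime.irreducible.isUnit_or_isUnit hzz.symm with h | h
      · rw [← Zsqrtd.norm_eq_one_iff] at h
        rw [hz] at h
        simp at h
        exact hp.one_lt.ne' h
      · rw [← Zsqrtd.norm_eq_one_iff, Zsqrtd.norm_conj] at h
        rw [hz] at h
        simp at h
        exact hp.one_lt.ne' h
    | succ k ih =>
      intro z hz
      have hdvd : ((p:ℕ) : GaussianInt) ∣ z := by
        have h1 : ((p:ℕ) : GaussianInt) ∣ ((z.norm : ℤ) : GaussianInt) := by
          rw [hz]
          have h2 : ((p:ℕ) : GaussianInt) ∣ ((p^(2*(k+1)+1) : ℕ) : GaussianInt) :=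
            Nat.cast_dvd_cast (dvd_pow_self p (by omega))
          simpa using h2
        rcases dvd_or_star_dvd hprime h1 with h | h
        · exact h
        · simpa using h
      obtain ⟨w, hw⟩ := hdvd
      have hnorm : ((p:ℕ) : GaussianInt).norm = ((p*p : ℕ) : ℤ) := by
        push_cast; rw [Zsqrtd.norm_natCast]
      have hwnorm : w.norm = ((p^(2*k+1) : ℕ) : ℤ) := by
        refine norm_quot (c := p^(2*k+1)) (q := p*p) ?_ hw hnorm (Nat.mul_ne_zero hp.pos.ne' hp.pos.ne')
        rw [hz]; congr 1; ring
      exact ih w hwnorm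
  haveI : IsEmpty {z : GaussianInt // z.norm = ((p^(2*k+1) : ℕ) : ℤ)} :=
    ⟨fun z => hempty k z.1 z.2⟩
  exact Nat.card_of_isEmpty

end Inert

end Jac

namespace Jac

section Split

variable {p : ℕ} (hp : p.Prime) (h1 : p % 4 = 1)

/-- In a domain: exponent comparison for factorizations by a prime not dividing `σ`. -/
lemma exp_lt_absurd {π σ u v : GaussianInt} (hπ : Prime π) (hnd : ¬ π ∣ σ) (hu : IsUnit u)
    {a c s t : ℕ} (heq : u * π^a * σ^s = v * π^c * σ^t) (hlt : a < c) : False := by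
  have h1 : π^(a+1) ∣ v * π^c * σ^t := by
    refine Dvd.dvd.mul_right ?_ _
    exact Dvd.dvd.mul_left (pow_dvd_pow π hlt) v
  rw [← heq] at h1
  have h2 : π ∣ u * σ^s := by
    rcases h1 with ⟨t', ht'⟩
    refine ⟨t', ?_⟩
    apply mul_left_cancel₀ (pow_ne_zero a hπ.ne_zero)
    calc π^a * (u * σ^s) = u * π^a * σ^s := by ring
      _ = π^(a+1) * t' := ht'
      _ = π^a * (π * t') := by ring
  rcases hπ.2.2 _ _ h2 with h | h
  · exact hπ.not_unit (isUnit_of_dvd_unit h hu)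
  · exact hnd (hπ.dvd_of_dvd_pow h)

include hp h1

lemma p_odd_core {x y : ℕ} (hxy : x^2 + y^2 = p) (hdvd : (p:ℤ) ∣ 4 * (x:ℤ)^2) : False := by
  have hco : Nat.Coprime p 4 := by
    have : Nat.gcd p 4 = Nat.gcd 4 p := Nat.gcd_comm p 4
    rw [Nat.Coprime, this, Nat.gcd_rec, h1]
    norm_num
  have hdvd' : p ∣ 4 * x^2 := by
    have := Int.natAbs_dvd_natAbs.mpr hdvd
    simpa [Int.natAbs_mul, Int.natAbs_pow] using this
  have hpx2 : p ∣ x^2 := (Nat.Coprime.dvd_of_dvd_mul_left hco hdvd')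
  have hpx : p ∣ x := hp.dvd_of_dvd_pow hpx2
  have hx0 : x = 0 := by
    rcases Nat.eq_zero_or_pos x with h | h
    · exact h
    · exfalso
      have : p ≤ x := Nat.le_of_dvd h hpx
      nlinarith [hp.two_le]
  subst hx0
  simp at hxy
  -- y^2 = p, p prime: impossible
  have : y ∣ p := ⟨y, by rw [← hxy]; ring⟩
  rcases hp.eq_one_or_self_of_dvd y this with h | h
  · subst h; simp at hxy; exact hp.one_lt.ne' hxy.symm
  · subst h
    nlinarith [hp.two_le]

lemma pi_not_dvd_star {x y : ℕ} (hxy : x^2 + y^2 = p) :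
    ¬ (⟨(x:ℤ),(y:ℤ)⟩ : GaussianInt) ∣ star (⟨(x:ℤ),(y:ℤ)⟩ : GaussianInt) := by
  intro hdvd
  set π : GaussianInt := ⟨(x:ℤ),(y:ℤ)⟩ with hπdef
  have hπnorm : π.norm = (p : ℤ) := by
    rw [Zsqrtd.norm_def, ← hxy]; push_cast; ring
  have hsum : π ∣ (((2*x : ℤ)) : GaussianInt) := by
    have : π + star π = (((2*x:ℤ)) : GaussianInt) := by
      ext <;> simp [hπdef, Zsqrtd.re_star, Zsqrtd.im_star] <;> ring
    rw [← this]
    exact dvd_add dvd_rfl hdvd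
  have hnd : π.norm ∣ Zsqrtd.norm (((2*x : ℤ)) : GaussianInt) := norm_dvd_of_dvd hsum
  rw [hπnorm, Zsqrtd.norm_intCast] at hnd
  exact p_odd_core hp h1 hxy (by convert hnd using 1; ring)

end Split

end Jac

namespace Jac

section Split2

variable {p : ℕ} (hp : p.Prime) {π : GaussianInt} (hπn : π.norm = (p : ℤ))
include hp hπn

lemma split_surj_pow : ∀ k : ℕ, ∀ z : GaussianInt, z.norm = ((p^k : ℕ) : ℤ) →
    ∃ (u : GaussianInt) (j : ℕ), j ≤ k ∧ u.norm = 1 ∧ z = u * π^j * (star π)^(k-j) := by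
  have hπ : Prime π := prime_of_norm_prime hp hπn
  have hσ : Prime (star π) := prime_of_norm_prime hp (by rw [Zsqrtd.norm_conj, hπn])
  have hππ : π * star π = ((p:ℕ) : GaussianInt) := by
    have := Zsqrtd.norm_eq_mul_conj π
    rw [hπn] at this
    exact_mod_cast this.symm
  intro k
  induction k with
  | zero =>
    intro z hz
    exact ⟨z, 0, le_refl 0, by simpa using hz, by simp⟩
  | succ k ih =>
    intro z hz
    have h1 : π ∣ ((z.norm : ℤ) : GaussianInt) := by
      rw [hz]
      have h2 : ((p:ℕ) : GaussianInt) ∣ ((p^(k+1) : ℕ) : GaussianInt) :=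
        Nat.cast_dvd_cast (dvd_pow_self p (by omega))
      exact dvd_trans ⟨star π, hππ.symm⟩ (by simpa using h2)
    have hp0 : p ≠ 0 := hp.pos.ne'
    rcases dvd_or_star_dvd hπ h1 with h | h
    · obtain ⟨w, hw⟩ := h
      have hwn : w.norm = ((p^k : ℕ) : ℤ) := by
        refine norm_quot (c := p^k) (q := p) ?_ hw hπn hp0
        rw [hz]; congr 1; ring
      obtain ⟨u, j, hj, hu, hwu⟩ := ih w hwn
      refine ⟨u, j+1, by omega, hu, ?_⟩
      have hks : k + 1 - (j + 1) = k - j := by omega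
      rw [hw, hwu, hks]; ring
    · obtain ⟨w, hw⟩ := h
      have hwn : w.norm = ((p^k : ℕ) : ℤ) := by
        refine norm_quot (c := p^k) (q := p) ?_ hw (by rw [Zsqrtd.norm_conj, hπn]) hp0
        rw [hz]; congr 1; ring
      obtain ⟨u, j, hj, hu, hwu⟩ := ih w hwn
      refine ⟨u, j, by omega, hu, ?_⟩
      have hks : k + 1 - j = (k - j) + 1 := by omega
      rw [hw, hwu, hks]; ring

lemma Zc_split_pow (hnd : ¬ π ∣ star π) (k : ℕ) : Zc (p^k) = Zc 1 * (k+1) := by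
  have hπ : Prime π := prime_of_norm_prime hp hπn
  have hσ0 : star π ≠ 0 := fun h => hπ.ne_zero (by simpa using congrArg star h)
  have hp0 : p ≠ 0 := hp.pos.ne'
  let f : {u : GaussianInt // u.norm = ((1:ℕ) : ℤ)} × Fin (k+1) →
      {z : GaussianInt // z.norm = ((p^k : ℕ) : ℤ)} := fun x =>
    ⟨x.1.1 * π^(x.2 : ℕ) * (star π)^(k - (x.2 : ℕ)), by
      have hj : (x.2 : ℕ) ≤ k := by omega
      rw [Zsqrtd.norm_mul, Zsqrtd.norm_mul, norm_pow, norm_pow, Zsqrtd.norm_conj, hπn]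
      have : (x.1.1).norm = 1 := by simpa using x.1.2
      rw [this, one_mul, ← pow_add]
      have : (x.2 : ℕ) + (k - (x.2 : ℕ)) = k := by omega
      rw [this]
      push_cast
      ring⟩
  have hbij : Function.Bijective f := by
    constructor
    · rintro ⟨u, a⟩ ⟨v, c⟩ h
      have hval : u.1 * π^(a:ℕ) * (star π)^(k-(a:ℕ)) = v.1 * π^(c:ℕ) * (star π)^(k-(c:ℕ)) :=
        congrArg Subtype.val h
      have hu : IsUnit u.1 := Zsqrtd.norm_eq_one_iff.mp (by simp [u.2])
      have hv : IsUnit v.1 := Zsqrtd.norm_eq_one_iff.mp (by simp [v.2])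
      have hac : (a : ℕ) = (c : ℕ) := by
        rcases lt_trichotomy (a:ℕ) (c:ℕ) with hlt | heq | hlt
        · exact (exp_lt_absurd hπ hnd hu hval hlt).elim
        · exact heq
        · exact (exp_lt_absurd hπ hnd hv hval.symm hlt).elim
      have huv : u.1 = v.1 := by
        rw [hac] at hval
        have h2 := mul_right_cancel₀ (pow_ne_zero _ hσ0) hval
        exact mul_right_cancel₀ (pow_ne_zero _ hπ.ne_zero) h2
      refine Prod.ext (Subtype.ext huv) (Fin.ext hac)
    · rintro ⟨z, hz⟩
      obtain ⟨u, j, hj, hu, hzu⟩ := split_surj_pow hp hπn k z hz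
      refine ⟨(⟨u, by simpa using hu⟩, ⟨j, by omega⟩), Subtype.ext hzu.symm⟩
  have hcard := Nat.card_eq_of_bijective f hbij
  rw [Nat.card_prod] at hcard
  rw [Zc, Zc, ← hcard]
  congr 1
  simp

end Split2

end Jac

namespace Jac

open ArithmeticFunction

def χ (d : ℕ) : ℤ := if d % 4 = 1 then 1 else if d % 4 = 3 then -1 else 0

lemma chi_mul (a b : ℕ) : χ (a * b) = χ a * χ b := by
  unfold χ
  rw [Nat.mul_mod]
  have ha : a % 4 < 4 := Nat.mod_lt _ (by norm_num)
  have hb : b % 4 < 4 := Nat.mod_lt _ (by norm_num)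
  set r := a % 4 with hr
  set s := b % 4 with hs
  interval_cases r <;> interval_cases s <;> norm_num

def χA : ArithmeticFunction ℤ := ⟨χ, by norm_num [χ]⟩

lemma χA_mult : χA.IsMultiplicative := ⟨by norm_num [χA, χ], fun {m n} _ => chi_mul m n⟩

/-- The divisor-sum function `∑_{d ∣ n} χ(d)`. -/
def Dfun : ArithmeticFunction ℤ := ↑zeta * χA

lemma Dfun_apply (n : ℕ) : Dfun n = ∑ d ∈ n.divisors, χ d := coe_zeta_mul_apply

lemma Dfun_mult : Dfun.IsMultiplicative := isMultiplicative_zeta.natCast.mul χA_mult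

lemma chi_pow (q : ℕ) (i : ℕ) : χ (q ^ i) = (χ q) ^ i := by
  induction i with
  | zero => simp [χ]
  | succ i ih => rw [pow_succ, pow_succ, chi_mul, ih]

lemma Dfun_prime_pow {q : ℕ} (hq : q.Prime) (k : ℕ) :
    Dfun (q^k) = ∑ i ∈ Finset.range (k+1), (χ q)^i := by
  rw [Dfun_apply, Nat.sum_divisors_prime_pow hq]
  exact Finset.sum_congr rfl fun i _ => chi_pow q i

lemma Dfun_two_pow (k : ℕ) : Dfun (2^k) = 1 := by
  rw [Dfun_prime_pow Nat.prime_two]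
  have : χ 2 = 0 := by norm_num [χ]
  rw [this]
  rw [Finset.sum_eq_single 0] <;> simp +contextual [zero_pow]

lemma Dfun_split_pow {q : ℕ} (hq : q.Prime) (h1 : q % 4 = 1) (k : ℕ) :
    Dfun (q^k) = (k+1 : ℤ) := by
  rw [Dfun_prime_pow hq]
  have : χ q = 1 := by simp [χ, h1]
  simp [this]

lemma Dfun_inert_pow {q : ℕ} (hq : q.Prime) (h3 : q % 4 = 3) (k : ℕ) :
    Dfun (q^k) = if Even k then 1 else 0 := by
  rw [Dfun_prime_pow hq]
  have : χ q = -1 := by simp [χ, h3]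
  rw [this, neg_one_geom_sum]
  simp [Nat.even_add_one, Nat.odd_iff, Nat.even_iff]
  rcases Nat.even_or_odd k with h | h
  · simp [Nat.even_iff.mp h, Nat.odd_iff]
  · simp [Nat.odd_iff.mp h, Nat.even_iff]

end Jac

namespace Jac

lemma main : ∀ n : ℕ, 1 ≤ n → (Zc n : ℤ) = 4 * Dfun n := by
  intro n
  induction n using Nat.recOnPosPrimePosCoprime with
  | prime_pow p k hp hk =>
    intro _
    have hpp : p.Prime := hp
    by_cases h2 : p = 2
    · subst h2
      rw [Zc_two_pow, Zc_one, Dfun_two_pow]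
      norm_num
    · have hodd : p % 2 = 1 := hpp.eq_two_or_odd.resolve_left h2
      have h14 : p % 4 = 1 ∨ p % 4 = 3 := by omega
      rcases h14 with h1 | h3
      · haveI : Fact p.Prime := ⟨hpp⟩
        obtain ⟨x, y, hxy⟩ := Nat.Prime.sq_add_sq (p := p) (by omega)
        have hπn : (⟨(x:ℤ),(y:ℤ)⟩ : GaussianInt).norm = (p : ℤ) := by
          rw [Zsqrtd.norm_def, ← hxy]; push_cast; ring
        have hnd := pi_not_dvd_star hpp h1 hxy
        rw [Zc_split_pow hpp hπn hnd k, Zc_one, Dfun_split_pow hpp h1 k]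
        push_cast; ring
      · rcases Nat.even_or_odd k with he | ho
        · obtain ⟨j, hj⟩ := he
          have hj' : k = 2 * j := by omega
          rw [hj', Zc_inert_even hpp h3 j, Zc_one, Dfun_inert_pow hpp h3]
          have : Even (2*j) := ⟨j, by ring⟩
          rw [if_pos this]
          norm_num
        · obtain ⟨j, hj⟩ := ho
          rw [hj, Zc_inert_odd hpp h3 j, Dfun_inert_pow hpp h3]
          have : ¬ Even (2*j+1) := by simp [Nat.even_iff]
          rw [if_neg this]
          norm_num
  | zero => intro h; omega
  | one =>
    intro _
    rw [Zc_one, Dfun_mult.1]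
    norm_num
  | coprime a b ha hb hab iha ihb =>
    intro _
    have h4 : (Zc 1 : ℤ) * Zc (a * b) = Zc a * Zc b := by
      exact_mod_cast congrArg (Nat.cast (R := ℤ)) (Zc_mul (by omega) (by omega) hab)
    rw [Zc_one] at h4
    have h5 : Dfun (a*b) = Dfun a * Dfun b := Dfun_mult.2 hab
    rw [iha (by omega), ihb (by omega)] at h4
    rw [h5]
    push_cast at h4 ⊢
    linarith

end Jac

namespace Jac

lemma Dfun_eq_cards (n : ℕ) : Dfun n =
    ((n.divisors.filter (fun d => d % 4 = 1)).card : ℤ) -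
    ((n.divisors.filter (fun d => d % 4 = 3)).card : ℤ) := by
  classical
  rw [Dfun_apply]
  rw [← Finset.sum_filter_add_sum_filter_not n.divisors (fun d => d % 4 = 1)]
  have h1 : ∀ d ∈ n.divisors.filter (fun d => d % 4 = 1), χ d = 1 := by
    intro d hd
    rw [Finset.mem_filter] at hd
    simp [χ, hd.2]
  rw [Finset.sum_congr rfl h1, Finset.sum_const, nsmul_eq_mul, mul_one]
  rw [← Finset.sum_filter_add_sum_filter_not (n.divisors.filter (fun d => ¬ d % 4 = 1))
    (fun d => d % 4 = 3)]
  have h2 : ∀ d ∈ (n.divisors.filter (fun d => ¬ d % 4 = 1)).filter (fun d => d % 4 = 3),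
      χ d = -1 := by
    intro d hd
    rw [Finset.mem_filter] at hd
    simp [χ, hd.2, (Finset.mem_filter.mp hd.1).2]
  have h3 : ∀ d ∈ (n.divisors.filter (fun d => ¬ d % 4 = 1)).filter (fun d => ¬ d % 4 = 3),
      χ d = 0 := by
    intro d hd
    rw [Finset.mem_filter] at hd
    have := (Finset.mem_filter.mp hd.1).2
    simp [χ, hd.2, this]
  rw [Finset.sum_congr rfl h2, Finset.sum_congr rfl h3, Finset.sum_const, Finset.sum_const]
  have h4 : (n.divisors.filter (fun d => ¬ d % 4 = 1)).filter (fun d => d % 4 = 3) =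
      n.divisors.filter (fun d => d % 4 = 3) := by
    rw [Finset.filter_filter]
    apply Finset.filter_congr
    intro d _
    constructor
    · exact fun h => h.2
    · exact fun h => ⟨by omega, h⟩
  rw [h4]
  simp
  ring

lemma ncard_eq_Zc (n : ℕ) :
    {p : ℤ × ℤ | p.1 ^ 2 + p.2 ^ 2 = (n : ℤ)}.ncard = Zc n := by
  rw [← Nat.card_coe_set_eq, Zc]
  apply Nat.card_congr
  refine ⟨fun q => ⟨⟨q.1.1, q.1.2⟩, ?_⟩, fun z => ⟨(z.1.re, z.1.im), ?_⟩, ?_, ?_⟩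
  · have h := q.2
    simp only [Set.mem_setOf_eq] at h
    rw [Zsqrtd.norm_def]
    linear_combination h
  · have h := z.2
    simp only [Set.mem_setOf_eq]
    rw [Zsqrtd.norm_def] at h
    linear_combination h
  · rintro ⟨⟨x, y⟩, hq⟩; rfl
  · rintro ⟨⟨x, y⟩, hz⟩; rfl

end Jac

theorem stmt_0 (n : ℕ) (hn : 1 ≤ n) :
    ({p : ℤ × ℤ | p.1 ^ 2 + p.2 ^ 2 = (n : ℤ)}.ncard : ℤ) =
      4 * (((n.divisors.filter (fun d => d % 4 = 1)).card : ℤ) -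
           ((n.divisors.filter (fun d => d % 4 = 3)).card : ℤ)) := by
  rw [Jac.ncard_eq_Zc, Jac.main n hn, Jac.Dfun_eq_cards]
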